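/- Let U be a k-dimensional F_q-subspace of F_{q^n} and let F(U) = {uv^{-1}F_q^* : u,v ∈ U∖0} be its set of fractions in projective space. Then |F(U)| ≥ (q^k−1)/(q−1), with equality if and only if U = aF_{q^k} for some a ∈ F_{q^n}^* (in particular k divides n). -/

import Mathlib

open Pointwise

section Aux

set_option linter.unusedSectionVars false

variable {F K : Type} [Field F] [Field K] [Algebra F K] [Fintype F] [Fintype K]

def linesSet (F : Type) [Field F] {K : Type} [Field K] [Algebra F K] (W : Submodule F K) :
    Set (Submodule F K) := {P | ∃ u, u ∈ W ∧ u ≠ 0 ∧ P = Submodule.span F {u}}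

lemma card_lines_mul (W : Submodule F K) :
    Nat.card (linesSet F W) * (Fintype.card F - 1) =
      Fintype.card F ^ (Module.finrank F W) - 1 := by
  classical
  set α := {u : K // u ∈ W ∧ u ≠ 0} with hα
  set f : α → linesSet F W :=
    (fun u => ⟨Submodule.span F {u.1}, u.1, u.2.1, u.2.2, rfl⟩) with hf
  have fib : ∀ P : linesSet F W, {u : α // f u = P} ≃ Fˣ := by
    intro P
    set u₀ : K := Classical.choose P.2 with hu₀def
    obtain ⟨hu₀, hu₀0, hP⟩ := Classical.choose_spec P.2
    refine Equiv.symm (Equiv.ofBijective (fun c =>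
      ⟨⟨(c : F) • u₀, W.smul_mem _ hu₀, by simp [smul_ne_zero_iff, hu₀def, hu₀0]⟩, ?_⟩) ⟨?_, ?_⟩)
    · apply Subtype.ext
      show Submodule.span F {(c : F) • u₀} = P.1
      rw [hP]
      exact Submodule.span_singleton_smul_eq c.isUnit _
    · intro c c' h
      have h2 : (c : F) • u₀ = (c' : F) • u₀ := congrArg (fun x => (x.1.1 : K)) h
      exact Units.ext (smul_left_injective F hu₀0 h2)
    · rintro ⟨⟨u, hu, hu0⟩, hfu⟩
      have hspan : Submodule.span F {u₀} = Submodule.span F {u} := by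
        have h3 : (f ⟨u, hu, hu0⟩ : Submodule F K) = (P : Submodule F K) :=
          congrArg Subtype.val hfu
        have h3 : Submodule.span F {u} = (P : Submodule F K) := h3
        exact hP.symm.trans h3.symm
      obtain ⟨z, hz⟩ := Submodule.span_singleton_eq_span_singleton.mp hspan
      refine ⟨z, ?_⟩
      apply Subtype.ext; apply Subtype.ext
      exact hz
  have e : α ≃ (linesSet F W) × Fˣ := (Equiv.sigmaFiberEquiv f).symm.trans
    (Equiv.sigmaEquivProdOfEquiv fib)
  have h1 : Nat.card α = Nat.card (linesSet F W) * (Fintype.card F - 1) := by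
    rw [Nat.card_congr e, Nat.card_prod, Nat.card_eq_fintype_card (α := Fˣ), Fintype.card_units]
  rw [← h1]
  haveI := Fintype.ofFinite W
  have e2 : α ≃ {u : W // u ≠ 0} :=
    ⟨fun u => ⟨⟨u.1, u.2.1⟩, by simpa [Submodule.mk_eq_zero] using u.2.2⟩,
     fun u => ⟨u.1.1, u.1.2, by simpa [Submodule.mk_eq_zero] using u.2⟩,
     fun u => rfl, fun u => rfl⟩
  have e3 : {u : W // u ≠ 0} ≃ {u : W | u ≠ (0 : W)} := Equiv.refl _
  rw [Nat.card_congr e2, Nat.card_congr e3, Nat.card_eq_fintype_card, Set.card_ne_eq,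
    Module.card_eq_pow_finrank (K := F)]

lemma card_lines_eq {q d : ℕ} (hq : Fintype.card F = q) (W : Submodule F K)
    (hW : Module.finrank F W = d) :
    Nat.card (linesSet F W) = (q ^ d - 1) / (q - 1) := by
  have h2 : 2 ≤ q := hq ▸ Fintype.one_lt_card
  have h1 : 0 < q - 1 := by omega
  have := card_lines_mul (F := F) W
  rw [hq, hW] at this
  rw [← this, Nat.mul_div_cancel _ h1]

lemma le_of_lines_subset {W₁ W₂ : Submodule F K}
    (h : linesSet F W₁ ⊆ linesSet F W₂) : W₁ ≤ W₂ := by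
  intro x hx
  rcases eq_or_ne x 0 with rfl | hx0
  · exact W₂.zero_mem
  obtain ⟨y, hy, hy0, hxy⟩ := h ⟨x, hx, hx0, rfl⟩
  have hxmem : x ∈ Submodule.span F {y} := hxy ▸ Submodule.mem_span_singleton_self x
  exact (Submodule.span_singleton_le_iff_mem y W₂).mpr hy hxmem

lemma mem_map_mulRight {v : K} (hv : v ≠ 0) (W : Submodule F K) (x : K) :
    x ∈ W.map (LinearMap.mulRight F v⁻¹) ↔ x * v ∈ W := by
  constructor
  · rintro ⟨u, hu, rfl⟩
    show u * v⁻¹ * v ∈ W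
    rwa [mul_assoc, inv_mul_cancel₀ hv, mul_one]
  · intro h
    exact ⟨x * v, h, by show x * v * v⁻¹ = x; rw [mul_assoc, mul_inv_cancel₀ hv, mul_one]⟩

lemma finrank_map_mulRight {v : K} (hv : v ≠ 0) (W : Submodule F K) :
    Module.finrank F (W.map (LinearMap.mulRight F v⁻¹)) = Module.finrank F W := by
  have hinj : Function.Injective (LinearMap.mulRight F v⁻¹) := by
    intro a b hab
    have : a * v⁻¹ = b * v⁻¹ := hab
    exact mul_right_cancel₀ (inv_ne_zero hv) this
  exact (LinearEquiv.finrank_eq (W.equivMapOfInjective _ hinj)).symm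

end Aux

/-- The number of fractions `f(U) = |{uv⁻¹F_q^* : u,v ∈ U∖0}|` satisfies
`f(U) ≥ (q^k - 1)/(q - 1)`, with equality iff `U = a·F_{q^k}` (so `k ∣ n`). -/
theorem stmt_6 (F K : Type) [Field F] [Field K] [Algebra F K]
    [Fintype F] [Fintype K] (q n k : ℕ)
    (hq : Fintype.card F = q) (hn : Module.finrank F K = n)
    (hk2 : 2 ≤ k) (hkn : 2 * k ≤ n)
    (U : Submodule F K) (hk : Module.finrank F U = k) :
    (q ^ k - 1) / (q - 1) ≤
      Nat.card {W : Submodule F K //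
        ∃ u v : K, u ∈ U ∧ v ∈ U ∧ u ≠ 0 ∧ v ≠ 0 ∧
          W = Submodule.span F {u * v⁻¹}} ∧
    (Nat.card {W : Submodule F K //
        ∃ u v : K, u ∈ U ∧ v ∈ U ∧ u ≠ 0 ∧ v ≠ 0 ∧
          W = Submodule.span F {u * v⁻¹}} = (q ^ k - 1) / (q - 1) ↔
      ∃ E : Subfield K, Nat.card E = q ^ k ∧
        (∃ a : K, a ≠ 0 ∧ (U : Set K) = a • (E : Set K)) ∧ k ∣ n) := by
  classical
  have hq2 : 2 ≤ q := hq ▸ Fintype.one_lt_card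
  set A : Set (Submodule F K) :=
    {W | ∃ u v : K, u ∈ U ∧ v ∈ U ∧ u ≠ 0 ∧ v ≠ 0 ∧ W = Submodule.span F {u * v⁻¹}} with hA
  have hcard_coe : Nat.card {W : Submodule F K //
        ∃ u v : K, u ∈ U ∧ v ∈ U ∧ u ≠ 0 ∧ v ≠ 0 ∧
          W = Submodule.span F {u * v⁻¹}} = A.ncard := (Nat.card_coe_set_eq A)
  -- a nonzero element of U
  have hUne : ∃ v₀, v₀ ∈ U ∧ v₀ ≠ 0 := by
    by_contra hcon
    push_neg at hcon
    have : U = ⊥ := by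
      rw [eq_bot_iff]; intro x hx; simpa using hcon x hx
    rw [this] at hk
    simp at hk; omega
  obtain ⟨v₀, hv₀U, hv₀0⟩ := hUne
  -- the shifted subspaces
  have hlineA : ∀ v, v ∈ U → v ≠ 0 →
      linesSet F (U.map (LinearMap.mulRight F v⁻¹)) ⊆ A := by
    rintro v hvU hv0 P ⟨x, hx, hx0, rfl⟩
    obtain ⟨u, hu, rfl⟩ := hx
    have hu0 : u ≠ 0 := by
      intro h; apply hx0; simp [h]
    exact ⟨u, v, hu, hvU, hu0, hv0, rfl⟩
  have hcardL : ∀ v : K, v ≠ 0 →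
      Nat.card (linesSet F (U.map (LinearMap.mulRight F v⁻¹))) = (q ^ k - 1) / (q - 1) := by
    intro v hv0
    exact card_lines_eq hq _ (by rw [finrank_map_mulRight hv0, hk])
  have hAfin : A.Finite := Set.toFinite A
  have hlower : (q ^ k - 1) / (q - 1) ≤ A.ncard := by
    rw [← hcardL v₀ hv₀0, Nat.card_coe_set_eq]
    exact Set.ncard_le_ncard (hlineA v₀ hv₀U hv₀0) hAfin
  refine ⟨hcard_coe ▸ hlower, ?_⟩
  rw [hcard_coe]
  constructor
  · -- equality implies field structure
    intro heq
    have hlinesA : ∀ v, v ∈ U → v ≠ 0 →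
        linesSet F (U.map (LinearMap.mulRight F v⁻¹)) = A := by
      intro v hvU hv0
      refine Set.eq_of_subset_of_ncard_le (hlineA v hvU hv0) ?_ hAfin
      rw [heq, ← hcardL v hv0, Nat.card_coe_set_eq]
    have hVeq : ∀ v, v ∈ U → v ≠ 0 →
        U.map (LinearMap.mulRight F v⁻¹) = U.map (LinearMap.mulRight F v₀⁻¹) := by
      intro v hvU hv0
      have h1 := (hlinesA v hvU hv0).trans (hlinesA v₀ hv₀U hv₀0).symm
      exact le_antisymm (le_of_lines_subset h1.le) (le_of_lines_subset h1.ge)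
    set V : Submodule F K := U.map (LinearMap.mulRight F v₀⁻¹) with hV
    have hmemV : ∀ x : K, x ∈ V ↔ x * v₀ ∈ U := fun x => mem_map_mulRight hv₀0 U x
    have hmemV' : ∀ v, v ∈ U → v ≠ 0 → ∀ x : K, x ∈ V ↔ x * v ∈ U := by
      intro v hvU hv0 x
      rw [← hVeq v hvU hv0]
      exact mem_map_mulRight hv0 U x
    have hone : (1 : K) ∈ V := (hmemV 1).mpr (by simpa using hv₀U)
    have hmul : ∀ x y : K, x ∈ V → y ∈ V → x * y ∈ V := by
      intro x y hx hy
      rcases eq_or_ne y 0 with rfl | hy0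
      · simpa using V.zero_mem
      have hyv₀ : y * v₀ ∈ U := (hmemV y).mp hy
      have hyv₀0 : y * v₀ ≠ 0 := mul_ne_zero hy0 hv₀0
      have := (hmemV' (y * v₀) hyv₀ hyv₀0 x).mp hx
      rw [hmemV]
      rw [← mul_assoc] at this
      exact this
    have hinv : ∀ x : K, x ∈ V → x⁻¹ ∈ V := by
      intro x hx
      rcases eq_or_ne x 0 with rfl | hx0
      · simpa using V.zero_mem
      have hxv₀ : x * v₀ ∈ U := (hmemV x).mp hx
      have hxv₀0 : x * v₀ ≠ 0 := mul_ne_zero hx0 hv₀0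
      rw [hmemV' (x * v₀) hxv₀ hxv₀0]
      rw [← mul_assoc, inv_mul_cancel₀ hx0, one_mul]
      exact hv₀U
    set E : Subfield K :=
      { carrier := (V : Set K)
        mul_mem' := fun ha hb => hmul _ _ ha hb
        one_mem' := hone
        add_mem' := fun ha hb => V.add_mem ha hb
        zero_mem' := V.zero_mem
        neg_mem' := fun ha => V.neg_mem ha
        inv_mem' := fun x hx => hinv x hx } with hE
    have hfinV : Module.finrank F V = k := by rw [hV, finrank_map_mulRight hv₀0, hk]
    haveI := Fintype.ofFinite V
    have hcardV : Nat.card V = q ^ k := by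
      rw [Nat.card_eq_fintype_card, Module.card_eq_pow_finrank (K := F), hq, hfinV]
    have hcardE : Nat.card E = q ^ k := by
      rw [← hcardV]
      exact Nat.card_congr (Equiv.setCongr rfl)
    refine ⟨E, hcardE, ⟨v₀, hv₀0, ?_⟩, ?_⟩
    · ext x
      constructor
      · intro hx
        refine ⟨x * v₀⁻¹, ?_, ?_⟩
        · show x * v₀⁻¹ ∈ V
          rw [hmemV, mul_assoc, inv_mul_cancel₀ hv₀0, mul_one]
          exact hx
        · show v₀ * (x * v₀⁻¹) = x
          field_simp
      · rintro ⟨e, he, rfl⟩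
        show v₀ * e ∈ U
        have : e * v₀ ∈ U := (hmemV e).mp he
        rwa [mul_comm]
    · -- k ∣ n
      haveI := Fintype.ofFinite E
      have h1 : Fintype.card K = Fintype.card E ^ Module.finrank E K :=
        Module.card_eq_pow_finrank
      have h2 : Fintype.card K = q ^ n := by
        rw [Module.card_eq_pow_finrank (K := F), hq, hn]
      have h3 : Fintype.card E = q ^ k := by
        rw [← Nat.card_eq_fintype_card, hcardE]
      rw [h2, h3, ← pow_mul] at h1
      have := Nat.pow_right_injective hq2 h1
      exact ⟨Module.finrank E K, this⟩
  · -- field structure implies equality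
    rintro ⟨E, hcardE, ⟨a, ha0, hUa⟩, -⟩
    -- E is an F-submodule
    have hsmulE : ∀ (c : F) (x : K), x ∈ (E : Set K) → c • x ∈ (E : Set K) := by
      intro c x hx
      have hax : a * x ∈ (U : Set K) := by
        rw [hUa]; exact Set.smul_mem_smul_set hx
      have h2 : c • (a * x) ∈ U := U.smul_mem c ((SetLike.mem_coe (p := U)).mp hax)
      rw [← mul_smul_comm] at h2
      have h3 : a * (c • x) ∈ (U : Set K) := h2
      rw [hUa] at h3
      obtain ⟨e, he, hee⟩ := h3
      have : e = c • x := by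
        have : a * e = a * (c • x) := hee
        exact mul_left_cancel₀ ha0 this
      rwa [← this]
    set E' : Submodule F K :=
      { carrier := (E : Set K)
        add_mem' := fun ha hb => E.add_mem ha hb
        zero_mem' := E.zero_mem
        smul_mem' := hsmulE } with hE'
    haveI := Fintype.ofFinite E'
    have hcardE' : Fintype.card E' = q ^ k := by
      rw [← Nat.card_eq_fintype_card]
      rw [← hcardE]
      exact Nat.card_congr (Equiv.setCongr rfl)
    have hfinE' : Module.finrank F E' = k := by
      have h1 : Fintype.card E' = q ^ Module.finrank F E' := by
        rw [Module.card_eq_pow_finrank (K := F), hq]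
      rw [hcardE'] at h1
      exact (Nat.pow_right_injective hq2 h1).symm
    have hAeq : A = linesSet F E' := by
      ext P
      constructor
      · rintro ⟨u, v, huU, hvU, hu0, hv0, rfl⟩
        obtain ⟨e₁, he₁, rfl⟩ : ∃ e₁ ∈ (E : Set K), a * e₁ = u := by
          have h4 : u ∈ (U : Set K) := huU
          rw [hUa] at h4; obtain ⟨e₁, he₁, h⟩ := h4; exact ⟨e₁, he₁, h⟩
        obtain ⟨e₂, he₂, rfl⟩ : ∃ e₂ ∈ (E : Set K), a * e₂ = v := by
          have h4 : v ∈ (U : Set K) := hvU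
          rw [hUa] at h4; obtain ⟨e₂, he₂, h⟩ := h4; exact ⟨e₂, he₂, h⟩
        have he₂0 : e₂ ≠ 0 := by rintro rfl; simp at hv0
        refine ⟨e₁ * e₂⁻¹, ?_, ?_, ?_⟩
        · show e₁ * e₂⁻¹ ∈ (E : Set K)
          exact E.mul_mem he₁ (E.inv_mem he₂)
        · exact mul_ne_zero (by rintro rfl; simp at hu0) (inv_ne_zero he₂0)
        · congr 1
          field_simp
      · rintro ⟨e, he, he0, rfl⟩
        have h1E : (1 : K) ∈ (E : Set K) := E.one_mem
        refine ⟨a * e, a * 1, ?_, ?_, mul_ne_zero ha0 he0, mul_ne_zero ha0 one_ne_zero, ?_⟩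
        · rw [← SetLike.mem_coe, hUa]; exact Set.smul_mem_smul_set he
        · rw [← SetLike.mem_coe, hUa]; exact Set.smul_mem_smul_set h1E
        · congr 1
          field_simp
    rw [hAeq, ← Nat.card_coe_set_eq]
    exact card_lines_eq hq E' hfinE'
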